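/- Hall's two-generator trapping lemma: let D be a countably infinite group with bijective enumeration d : ℕ → D, and in the unrestricted wreath product D Wr ℤ define ω ∈ D^ℤ by ω(2^k) = d(k) for k = 0,1,2,... and ω(i) = 1 for all other i ∈ ℤ. Let H = ⟨ω, z⟩ where z is the shift generator. Then for every l ∈ D and every n₀ ∈ ℕ there exists ρ ∈ H lying in the base group D^ℤ with ρ(0) = l and ρ(j) = 1 for all j with 0 < |j| ≤ n₀. -/

import Mathlib

/-- The action of `H` on the full direct product `H → G` by permuting coordinates. -/
def permAction (G H : Type*) [Group G] [Group H] : H →* MulAut (H → G) where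
  toFun h :=
    { toFun := fun f x => f (h⁻¹ * x)
      invFun := fun f x => f (h * x)
      left_inv := fun f => funext fun x => by simp
      right_inv := fun f => funext fun x => by simp
      map_mul' := fun f g => rfl }
  map_one' := by
    apply MulEquiv.ext
    intro f; funext x; simp
  map_mul' := fun h₁ h₂ => by
    apply MulEquiv.ext
    intro f; funext x
    simp [mul_assoc]

/-- The unrestricted wreath product `D Wr ℤ` (with `ℤ` written multiplicatively). -/
abbrev WreathZ (D : Type*) [Group D] :=
  (Multiplicative ℤ → D) ⋊[permAction D (Multiplicative ℤ)] Multiplicative ℤ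

-- aux: arithmetic lemma
lemma hall_aux_arith (n₀ i : ℕ) (hi : n₀ + 1 ≤ i) (m : ℤ) (hm : m ≠ 0)
    (hm2 : |m| ≤ (n₀ : ℤ)) (k : ℕ) : (2 : ℤ) ^ i + m ≠ 2 ^ k := by
  intro h
  have hm' : m = 2 ^ k - 2 ^ i := by linarith
  have hn : (n₀ : ℤ) < 2 ^ n₀ := by exact_mod_cast Nat.lt_two_pow_self (n := n₀)
  rcases lt_trichotomy k i with hk | hk | hk
  · -- k < i : 2^i - 2^k ≥ 2^(i-1) ≥ 2^n₀ > n₀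
    have h1 : (2:ℤ) ^ k ≤ 2 ^ (i - 1) := by
      apply pow_le_pow_right₀ (by norm_num); omega
    have h2 : (2:ℤ) ^ n₀ ≤ 2 ^ (i-1) := by
      apply pow_le_pow_right₀ (by norm_num); omega
    have h3 : (2:ℤ) ^ i = 2 ^ (i-1) * 2 := by
      rw [← pow_succ]; congr 1; omega
    have : (n₀:ℤ) < 2 ^ i - 2 ^ k := by nlinarith
    have habs : |m| = 2 ^ i - 2 ^ k := by
      rw [hm', abs_sub_comm, abs_of_nonneg]; linarith
    linarith [habs ▸ hm2]
  · exact hm (by simp [hm', hk])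
  · have h1 : (2:ℤ) ^ i * 2 ≤ 2 ^ k := by
      rw [← pow_succ]; apply pow_le_pow_right₀ (by norm_num); omega
    have h2 : (2:ℤ) ^ n₀ ≤ 2 ^ i := by
      apply pow_le_pow_right₀ (by norm_num); omega
    have habs : |m| = 2 ^ k - 2 ^ i := by
      rw [hm', abs_of_nonneg]; linarith
    linarith [habs ▸ hm2]

-- aux: choose i,j
lemma hall_aux_choice {D : Type*} [Group D] (d : ℕ → D) (hd : Function.Bijective d)
    (l : D) (n₀ : ℕ) : ∃ i j : ℕ, n₀ + 1 ≤ i ∧ n₀ + 1 ≤ j ∧ d i * d j = l := by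
  set e := Equiv.ofBijective d hd with he
  set f : ℕ → ℕ := fun i => e.symm ((d i)⁻¹ * l) with hf
  have hfinj : Function.Injective f := by
    intro a b hab
    have := congrArg e hab
    simp only [hf, Equiv.apply_symm_apply] at this
    have : d a = d b := by
      have := mul_right_cancel (a := (d a)⁻¹) (b := l) (c := (d b)⁻¹) this
      exact inv_injective this
    exact hd.injective this
  have : ∃ i, n₀ + 1 ≤ i ∧ n₀ + 1 ≤ f i := by
    by_contra hcon
    push_neg at hcon
    have hmap : ∀ a ∈ Finset.Ico (n₀+1) (2*n₀+3), f a ∈ Finset.range (n₀+1) := by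
      intro a ha
      simp only [Finset.mem_Ico] at ha
      simp only [Finset.mem_range]
      have := hcon a (by omega)
      omega
    have := Finset.card_le_card_of_injOn f hmap (Function.Injective.injOn hfinj)
    simp [Nat.card_Ico] at this
    omega
  obtain ⟨i, hi1, hi2⟩ := this
  refine ⟨i, f i, hi1, hi2, ?_⟩
  have : d (f i) = (d i)⁻¹ * l := by
    have : e (f i) = (d i)⁻¹ * l := by simp [hf]
    simpa [he, Equiv.ofBijective_apply] using this
  rw [this]; group

/-- Hall's two-generator trapping lemma: with `D` countably infinite, enumerated by
the bijection `d : ℕ → D`, and `ω` the element of the base group of `D Wr ℤ` with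
`ω(2^k) = d k` and `ω(i) = 1` at all other coordinates, the two-generator subgroup
`H = ⟨ω, z⟩` (where `z` is the shift) contains, for every `l ∈ D` and `n₀ ∈ ℕ`, an
element `ρ` of the base group with `ρ(0) = l` and `ρ(j) = 1` for `0 < |j| ≤ n₀`. -/
theorem hall_trapping_lemma (D : Type*) [Group D] (d : ℕ → D)
    (hd : Function.Bijective d) (ω : Multiplicative ℤ → D)
    (hω1 : ∀ k : ℕ, ω (Multiplicative.ofAdd ((2 : ℤ) ^ k)) = d k)
    (hω2 : ∀ i : ℤ, (∀ k : ℕ, i ≠ 2 ^ k) → ω (Multiplicative.ofAdd i) = 1) :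
    ∀ (l : D) (n₀ : ℕ), ∃ ρ : Multiplicative ℤ → D,
      (SemidirectProduct.inl ρ : WreathZ D) ∈
        Subgroup.closure {(SemidirectProduct.inl ω : WreathZ D),
          SemidirectProduct.inr (Multiplicative.ofAdd (1 : ℤ))} ∧
      ρ (Multiplicative.ofAdd (0 : ℤ)) = l ∧
      ∀ j : ℤ, 0 < |j| → |j| ≤ (n₀ : ℤ) → ρ (Multiplicative.ofAdd j) = 1 := by
  intro l n₀
  obtain ⟨i, j, hi, hj, hij⟩ := hall_aux_choice d hd l n₀
  set φ := permAction D (Multiplicative ℤ)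
  set a : Multiplicative ℤ := Multiplicative.ofAdd (-(2:ℤ)^i) with ha
  set b : Multiplicative ℤ := Multiplicative.ofAdd (-(2:ℤ)^j) with hb
  refine ⟨(φ a ω) * (φ b ω), ?_, ?_, ?_⟩
  · -- membership
    set S : Set (WreathZ D) := {(SemidirectProduct.inl ω : WreathZ D),
          SemidirectProduct.inr (Multiplicative.ofAdd (1 : ℤ))} with hS
    have hω : (SemidirectProduct.inl ω : WreathZ D) ∈ Subgroup.closure S :=
      Subgroup.subset_closure (by simp [hS])
    have hz : (SemidirectProduct.inr (Multiplicative.ofAdd (1:ℤ)) : WreathZ D) ∈ Subgroup.closure S :=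
      Subgroup.subset_closure (by simp [hS])
    have hzn : ∀ m : ℤ, (SemidirectProduct.inr (Multiplicative.ofAdd m) : WreathZ D) ∈ Subgroup.closure S := by
      intro m
      have : (SemidirectProduct.inr (Multiplicative.ofAdd m) : WreathZ D) =
          (SemidirectProduct.inr (Multiplicative.ofAdd (1:ℤ)) : WreathZ D) ^ m := by
        rw [← map_zpow]
        congr 1
        simp [← ofAdd_zsmul]
      rw [this]
      exact Subgroup.zpow_mem _ hz m
    have key : ∀ c : Multiplicative ℤ, (SemidirectProduct.inl (φ c ω) : WreathZ D) ∈ Subgroup.closure S := by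
      intro c
      rw [SemidirectProduct.inl_aut]
      have hc : (SemidirectProduct.inr c : WreathZ D) ∈ Subgroup.closure S := by
        have := hzn c.toAdd
        simpa using this
      have hcinv : (SemidirectProduct.inr c⁻¹ : WreathZ D) ∈ Subgroup.closure S := by
        rw [map_inv]; exact inv_mem hc
      exact mul_mem (mul_mem hc hω) hcinv
    rw [map_mul]
    exact mul_mem (key a) (key b)
  · -- value at 0
    show ω (a⁻¹ * Multiplicative.ofAdd (0:ℤ)) * ω (b⁻¹ * Multiplicative.ofAdd (0:ℤ)) = l
    have h1 : a⁻¹ * Multiplicative.ofAdd (0:ℤ) = Multiplicative.ofAdd ((2:ℤ)^i) := by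
      simp [ha]
    have h2 : b⁻¹ * Multiplicative.ofAdd (0:ℤ) = Multiplicative.ofAdd ((2:ℤ)^j) := by
      simp [hb]
    rw [h1, h2, hω1, hω1, hij]
  · -- trivial on small coords
    intro m hm1 hm2
    show ω (a⁻¹ * Multiplicative.ofAdd m) * ω (b⁻¹ * Multiplicative.ofAdd m) = 1
    have h1 : a⁻¹ * Multiplicative.ofAdd m = Multiplicative.ofAdd ((2:ℤ)^i + m) := by
      simp [ha, ← ofAdd_add]
    have h2 : b⁻¹ * Multiplicative.ofAdd m = Multiplicative.ofAdd ((2:ℤ)^j + m) := by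
      simp [hb, ← ofAdd_add]
    have hm0 : m ≠ 0 := by intro h; simp [h] at hm1
    rw [h1, h2, hω2 _ (hall_aux_arith n₀ i hi m hm0 hm2),
        hω2 _ (hall_aux_arith n₀ j hj m hm0 hm2), mul_one]
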